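/- Let X be an uncountable Polish space and let C ⊆ X be a nonempty analytic set. Then there exists a sequence y : ω → X such that C = Λ_y(FS) = Λ_y(H). Consequently, the family of nonempty sets of the form Λ_y(FS) for y : ω → X, as well as the family of nonempty sets of the form Λ_y(H), each coincides with the family of nonempty analytic subsets of X. -/

import Mathlib

open Set Filter Topology

/-- `FS(D)`: the set of finite sums of distinct elements of `D`. -/
def FS (D : Set ℕ) : Set ℕ :=
  {n | ∃ α : Finset ℕ, ↑α ⊆ D ∧ α.Nonempty ∧ ∑ i ∈ α, i = n}

variable {X : Type*}

/-- `η` is an `FS`-limit point of the sequence `x : ω → X`. -/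
def IsFSLimitPoint [TopologicalSpace X] (x : ℕ → X) (η : X) : Prop :=
  ∃ D : Set ℕ, D.Infinite ∧ ∀ U ∈ 𝓝 η, ∃ K : Set ℕ, K.Finite ∧
    ∀ n ∈ FS (D \ K), x n ∈ U

/-- `η` is an `FS`-cluster point of the sequence `x : ω → X`. -/
def IsFSClusterPoint [TopologicalSpace X] (x : ℕ → X) (η : X) : Prop :=
  ∀ U ∈ 𝓝 η, ∃ D : Set ℕ, D.Infinite ∧ FS D ⊆ {n | x n ∈ U}

/-- The Hindman ideal `H`: sets which are not IP-sets. -/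
def hindmanIdeal : Set (Set ℕ) :=
  {S | ∀ D : Set ℕ, D.Infinite → ¬ FS D ⊆ S}

/-- `η` is an `I`-limit point of `y`: some subsequence indexed by a set `S ∉ I`
converges (in the ordinary sense) to `η`. -/
def IsIdealLimitPoint [TopologicalSpace X] (I : Set (Set ℕ)) (y : ℕ → X) (η : X) : Prop :=
  ∃ S : Set ℕ, S ∉ I ∧ ∀ U ∈ 𝓝 η, {n ∈ S | y n ∉ U}.Finite

namespace HindmanProof


def code (x : ℕ → ℕ) : ℕ → ℕ
  | 0 => 0
  | k + 1 => Nat.pair (code x k) (x k) + 1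

lemma code_lt_succ (x : ℕ → ℕ) (k : ℕ) : code x k < code x (k + 1) := by
  have := Nat.left_le_pair (code x k) (x k)
  simp only [code]; omega

lemma code_strictMono (x : ℕ → ℕ) : StrictMono (code x) :=
  strictMono_nat_of_lt_succ (code_lt_succ x)

lemma code_inj {x x' : ℕ → ℕ} : ∀ {k k' : ℕ}, code x k = code x' k' →
    k = k' ∧ ∀ i < k, x i = x' i
  | 0, 0, _ => ⟨rfl, fun i hi => absurd hi (Nat.not_lt_zero i)⟩
  | 0, k' + 1, h => by simp [code] at h
  | k + 1, 0, h => by simp [code] at h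
  | k + 1, k' + 1, h => by
      simp only [code, Nat.add_right_cancel_iff] at h
      obtain ⟨h1, h2⟩ := Nat.pair_eq_pair.mp h
      obtain ⟨hk, hx⟩ := code_inj h1
      refine ⟨by omega, fun i hi => ?_⟩
      rcases Nat.lt_succ_iff_lt_or_eq.mp hi with h | h
      · exact hx i h
      · subst h; subst hk; exact h2

def trunc (x : ℕ → ℕ) (k : ℕ) : ℕ → ℕ := fun i => if i < k then x i else 0

def Good (n : ℕ) (x : ℕ → ℕ) (k : ℕ) : Prop :=
  0 < k ∧ n.testBit (code x k) = true ∧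
    ∀ i, n.testBit i = true → ∃ j, 0 < j ∧ j ≤ k ∧ i = code x j

lemma good_unique {n : ℕ} {x x' : ℕ → ℕ} {k k' : ℕ} (h : Good n x k) (h' : Good n x' k') :
    k = k' ∧ trunc x k = trunc x' k' := by
  obtain ⟨j, hj0, hjk, hcode⟩ := h.2.2 _ h'.2.1
  obtain ⟨hkj, hagree⟩ := code_inj hcode.symm
  obtain ⟨j', hj0', hjk', hcode'⟩ := h'.2.2 _ h.2.1
  obtain ⟨hkj', _⟩ := code_inj hcode'.symm
  have hkk : k = k' := by omega
  subst hkk; subst hkj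
  exact ⟨rfl, funext fun i => by
    simp only [trunc]; split
    · exact hagree i ‹_›
    · rfl⟩

lemma testBit_add_of_dvd {a b v : ℕ} (ha : a < 2 ^ v) (hb : 2 ^ v ∣ b) (j : ℕ) :
    (a + b).testBit j = (a.testBit j || b.testBit j) := by
  obtain ⟨b', rfl⟩ := hb
  rw [Nat.add_comm, Nat.testBit_two_pow_mul_add _ ha, Nat.testBit_two_pow_mul]
  rcases Nat.lt_or_ge j v with h | h
  · simp [h, Nat.not_le_of_lt h]
  · simp [h, Nat.not_lt_of_le h, Nat.testBit_lt_two_pow (lt_of_lt_of_le ha (Nat.pow_le_pow_right (by norm_num) h))]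

lemma testBit_sum_pow (s : Finset ℕ) (j : ℕ) :
    (∑ i ∈ s, 2 ^ i).testBit j = decide (j ∈ s) := by
  induction s using Finset.induction_on_min with
  | empty => simp
  | insert a s hmin ih =>
    rw [Finset.sum_insert (fun ha => lt_irrefl a (hmin a ha))]
    have hdvd : 2 ^ (a + 1) ∣ ∑ i ∈ s, 2 ^ i :=
      Finset.dvd_sum fun i hi => pow_dvd_pow 2 (hmin i hi)
    rw [testBit_add_of_dvd (Nat.pow_lt_pow_right (by norm_num) (Nat.lt_succ_self a)) hdvd, ih]
    rw [Nat.testBit_two_pow]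
    by_cases h : j = a <;> by_cases h2 : j ∈ s <;>
      simp [h, h2, eq_comm]



lemma FS_mono {D D' : Set ℕ} (h : D ⊆ D') : FS D ⊆ FS D' :=
  fun n ⟨α, hα, hne, hs⟩ => ⟨α, fun a ha => h (hα ha), hne, hs⟩

lemma lt_of_mem_FS_diff_Iic {D : Set ℕ} {m n : ℕ} (h : n ∈ FS (D \ Set.Iic m)) : m < n := by
  obtain ⟨α, hα, ⟨a, ha⟩, hs⟩ := h
  have h1 : m < a := by have := hα ha; simp [Set.mem_diff, Set.mem_Iic] at this; omega
  have h2 : a ≤ n := hs ▸ Finset.single_le_sum (fun i _ => Nat.zero_le i) ha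
  omega

lemma not_mem_hindmanIdeal_iff {S : Set ℕ} :
    S ∉ hindmanIdeal ↔ ∃ D : Set ℕ, D.Infinite ∧ FS D ⊆ S := by
  simp only [hindmanIdeal, Set.mem_setOf_eq]; push_neg; rfl

/-- H-limit points are FS-limit points, for any sequence. -/
lemma isFSLimitPoint_of_isIdealLimitPoint [TopologicalSpace X] {y : ℕ → X} {η : X}
    (h : IsIdealLimitPoint hindmanIdeal y η) : IsFSLimitPoint y η := by
  obtain ⟨S, hS, hconv⟩ := h
  obtain ⟨D, hD, hDS⟩ := not_mem_hindmanIdeal_iff.mp hS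
  refine ⟨D, hD, fun U hU => ?_⟩
  obtain ⟨m, hm⟩ := (hconv U hU).bddAbove
  refine ⟨Set.Iic m, Set.finite_Iic m, fun n hn => ?_⟩
  have h1 : m < n := lt_of_mem_FS_diff_Iic hn
  have h2 : n ∈ S := hDS (FS_mono (Set.diff_subset) hn)
  by_contra hbad
  exact absurd (hm ⟨h2, hbad⟩) (by omega)

variable {X : Type*} [TopologicalSpace X]

open scoped Classical in
noncomputable def seqOf (f : (ℕ → ℕ) → X) (n : ℕ) : X :=
  if h : ∃ p : (ℕ → ℕ) × ℕ, Good n p.1 p.2 then f (trunc h.choose.1 h.choose.2)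
  else f (fun _ => 0)

lemma seqOf_eq_of_good {f : (ℕ → ℕ) → X} {n : ℕ} {x : ℕ → ℕ} {k : ℕ} (h : Good n x k) :
    seqOf f n = f (trunc x k) := by
  have hex : ∃ p : (ℕ → ℕ) × ℕ, Good n p.1 p.2 := ⟨(x, k), h⟩
  rw [seqOf]
  rw [dif_pos hex]
  obtain ⟨hk, ht⟩ := good_unique hex.choose_spec h
  rw [ht]

lemma seqOf_eq_of_not {f : (ℕ → ℕ) → X} {n : ℕ} (h : ¬ ∃ p : (ℕ → ℕ) × ℕ, Good n p.1 p.2) :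
    seqOf f n = f (fun _ => 0) := by rw [seqOf]; rw [dif_neg h]

lemma tendsto_trunc (z : ℕ → ℕ) : Tendsto (trunc z) atTop (𝓝 z) := by
  rw [tendsto_pi_nhds]
  intro i
  apply Tendsto.congr' _ (tendsto_const_nhds (α := ℕ) (f := atTop))
  filter_upwards [eventually_ge_atTop (i + 1)] with k hk
  simp [trunc, Nat.lt_of_lt_of_le (Nat.lt_succ_self i) hk]

lemma sum_range_two_pow_lt (n : ℕ) : ∑ i ∈ Finset.range n, 2 ^ i < 2 ^ n := by
  induction n with
  | zero => simp
  | succ n ih => rw [Finset.sum_range_succ, pow_succ]; omega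

lemma exists_image_of_subset_range {α : Finset ℕ} {q : ℕ → ℕ} (hq : Function.Injective q)
    (h : ↑α ⊆ Set.range q) : ∃ A : Finset ℕ, α = A.image q := by
  classical
  refine ⟨α.preimage q hq.injOn, ?_⟩
  rw [Finset.image_preimage, Finset.filter_true_of_mem]
  intro a ha
  simpa using h ha

/-- Forward direction: every point of `range f` is an H-limit point of `seqOf f`. -/
lemma forward {f : (ℕ → ℕ) → X} (hf : Continuous f) (x : ℕ → ℕ) :
    IsIdealLimitPoint hindmanIdeal (seqOf f) (f x) := by
  classical
  set q : ℕ → ℕ := fun k => 2 ^ code x (k + 1) with hq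
  have hqinj : Function.Injective q := by
    intro a b hab
    have h1 : code x (a + 1) = code x (b + 1) := Nat.pow_right_injective (le_refl 2) hab
    have := (code_strictMono x).injective h1
    omega
  refine ⟨FS (Set.range q), ?_, ?_⟩
  · rw [not_mem_hindmanIdeal_iff]
    exact ⟨Set.range q, Set.infinite_range_of_injective hqinj, subset_rfl⟩
  · intro U hU
    have htd : Tendsto (fun k => f (trunc x k)) atTop (𝓝 (f x)) :=
      (hf.tendsto x).comp (tendsto_trunc x)
    obtain ⟨k0, hk0⟩ := mem_atTop_sets.mp (htd hU)
    set k1 := max k0 1 with hk1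
    apply Set.Finite.subset (Set.finite_Iio (2 ^ (code x k1 + 1)))
    rintro n ⟨hnS, hnU⟩
    obtain ⟨α, hα, hne, hsum⟩ := hnS
    obtain ⟨A, rfl⟩ := exists_image_of_subset_range hqinj hα
    have hAne : A.Nonempty := Finset.image_nonempty.mp hne
    have hsum2 : ∑ k ∈ A, q k = n := by
      rw [← hsum, Finset.sum_image (fun a _ b _ h => hqinj h)]
    set s := A.image (fun k => code x (k + 1)) with hsdef
    have hcinj : ∀ a ∈ A, ∀ b ∈ A, code x (a + 1) = code x (b + 1) → a = b := by
      intro a _ b _ h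
      have := (code_strictMono x).injective h
      omega
    have hs : ∑ i ∈ s, 2 ^ i = n := by
      rw [hsdef, Finset.sum_image hcinj]
      exact hsum2
    set M := A.max' hAne + 1 with hM
    have hgood : Good n x M := by
      refine ⟨Nat.succ_pos _, ?_, ?_⟩
      · rw [← hs, testBit_sum_pow]
        simp only [decide_eq_true_eq, hsdef, Finset.mem_image]
        exact ⟨A.max' hAne, A.max'_mem hAne, rfl⟩
      · intro i hi
        rw [← hs, testBit_sum_pow] at hi
        simp only [decide_eq_true_eq, hsdef, Finset.mem_image] at hi
        obtain ⟨k, hk, rfl⟩ := hi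
        exact ⟨k + 1, Nat.succ_pos _, by have := A.le_max' k hk; omega, rfl⟩
    have hyn : seqOf f n = f (trunc x M) := seqOf_eq_of_good hgood
    have hMlt : M < k1 := by
      by_contra hcon
      push_neg at hcon
      exact hnU (hyn ▸ hk0 M (le_trans (le_max_left _ _) hcon))
    have hb : n ≤ ∑ i ∈ Finset.range (code x k1 + 1), 2 ^ i := by
      rw [← hs]
      apply Finset.sum_le_sum_of_subset
      intro i hi
      simp only [hsdef, Finset.mem_image] at hi
      obtain ⟨k, hk, rfl⟩ := hi
      have h1 : k + 1 ≤ k1 := by have := A.le_max' k hk; omega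
      have h2 : code x (k + 1) ≤ code x k1 := (code_strictMono x).monotone h1
      simp only [Finset.mem_range]
      omega
    exact lt_of_le_of_lt hb (sum_range_two_pow_lt _)


lemma exists_div_finset (D : Set ℕ) (hD : D.Infinite) (M B : ℕ) :
    ∃ α : Finset ℕ, ↑α ⊆ D ∧ (∀ a ∈ α, M < a) ∧ α.Nonempty ∧ 2 ^ B ∣ ∑ a ∈ α, a := by
  classical
  have hD' : (D \ Set.Iic M).Infinite := hD.diff (Set.finite_Iic M)
  have hres : ∃ r, ((D \ Set.Iic M) ∩ {d | d % 2 ^ B = r}).Infinite := by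
    by_contra hcon
    push_neg at hcon
    have hsub : D \ Set.Iic M ⊆ ⋃ r ∈ Finset.range (2 ^ B),
        ((D \ Set.Iic M) ∩ {d | d % 2 ^ B = r}) := by
      intro d hd
      simp only [Set.mem_iUnion]
      exact ⟨d % 2 ^ B, by
        simp only [Finset.mem_range, exists_prop]
        exact ⟨Nat.mod_lt _ (Nat.pow_pos (by norm_num)), hd, rfl⟩⟩
    exact hD' (Set.Finite.subset (Set.Finite.biUnion (Finset.range (2 ^ B)).finite_toSet
      (fun r _ => hcon r)) hsub)
  obtain ⟨r, hr⟩ := hres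
  obtain ⟨α, hαsub, hαcard⟩ := hr.exists_subset_card_eq (2 ^ B)
  refine ⟨α, fun a ha => ((hαsub ha).1).1, fun a ha => ?_, ?_, ?_⟩
  · have := ((hαsub ha).1).2
    simp only [Set.mem_Iic] at this
    omega
  · rw [← Finset.card_pos, hαcard]
    exact Nat.pow_pos (by norm_num)
  · have hmod : ∀ a ∈ α, a = 2 ^ B * (a / 2 ^ B) + r := by
      intro a ha
      have := (hαsub ha).2
      simp only [Set.mem_setOf_eq] at this
      conv_lhs => rw [← Nat.div_add_mod a (2 ^ B)]
      rw [this]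
    have hsum : ∑ a ∈ α, a = 2 ^ B * (∑ a ∈ α, a / 2 ^ B) + α.card * r := by
      rw [Finset.sum_congr rfl hmod, Finset.sum_add_distrib, ← Finset.mul_sum,
        Finset.sum_const, smul_eq_mul]
    rw [hsum, hαcard]
    exact ⟨(∑ a ∈ α, a / 2 ^ B) + r, by ring⟩

variable {D : Set ℕ} (hD : D.Infinite)

noncomputable def alphaSeq (hD : D.Infinite) : ℕ → Finset ℕ
  | 0 => (exists_div_finset D hD 0 1).choose
  | j + 1 => (exists_div_finset D hD (max (j + 1) (∑ a ∈ alphaSeq hD j, a))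
      ((∑ a ∈ alphaSeq hD j, a) + 1)).choose

noncomputable def gSeq (hD : D.Infinite) (j : ℕ) : ℕ := ∑ a ∈ alphaSeq hD j, a

lemma alphaSeq_spec (j : ℕ) : ↑(alphaSeq hD j) ⊆ D ∧ (∀ a ∈ alphaSeq hD j, j < a) ∧
    (alphaSeq hD j).Nonempty := by
  cases j with
  | zero =>
    obtain ⟨h1, h2, h3, _⟩ := (exists_div_finset D hD 0 1).choose_spec
    exact ⟨h1, h2, h3⟩
  | succ j =>
    obtain ⟨h1, h2, h3, _⟩ := (exists_div_finset D hD (max (j + 1) (∑ a ∈ alphaSeq hD j, a))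
      ((∑ a ∈ alphaSeq hD j, a) + 1)).choose_spec
    exact ⟨h1, fun a ha => lt_of_le_of_lt (le_max_left _ _) (h2 a ha), h3⟩

lemma alphaSeq_succ_spec (j : ℕ) : (∀ a ∈ alphaSeq hD (j + 1), gSeq hD j < a) ∧
    2 ^ (gSeq hD j + 1) ∣ gSeq hD (j + 1) := by
  obtain ⟨_, h2, _, h4⟩ := (exists_div_finset D hD (max (j + 1) (∑ a ∈ alphaSeq hD j, a))
    ((∑ a ∈ alphaSeq hD j, a) + 1)).choose_spec
  exact ⟨fun a ha => lt_of_le_of_lt (le_max_right _ _) (h2 a ha), h4⟩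

lemma gSeq_pos (j : ℕ) : 0 < gSeq hD j := by
  obtain ⟨_, h2, a, ha⟩ := alphaSeq_spec hD j
  have h1 : 0 < a := Nat.lt_of_le_of_lt (Nat.zero_le j) (h2 a ha)
  exact lt_of_lt_of_le h1 (Finset.single_le_sum (fun i _ => Nat.zero_le i) ha)

lemma elem_le_gSeq {j a : ℕ} (ha : a ∈ alphaSeq hD j) : a ≤ gSeq hD j :=
  Finset.single_le_sum (fun i _ => Nat.zero_le i) ha

lemma gSeq_lt_succ (j : ℕ) : gSeq hD j < gSeq hD (j + 1) := by
  have hdvd := (alphaSeq_succ_spec hD j).2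
  have h1 : 2 ^ (gSeq hD j + 1) ≤ gSeq hD (j + 1) := Nat.le_of_dvd (gSeq_pos hD _) hdvd
  have h2 : gSeq hD j < 2 ^ (gSeq hD j + 1) :=
    lt_of_lt_of_le Nat.lt_two_pow_self (Nat.pow_le_pow_right (by norm_num) (Nat.le_succ _))
  omega

lemma gSeq_strictMono : StrictMono (gSeq hD) := strictMono_nat_of_lt_succ (gSeq_lt_succ hD)

lemma gSeq_dvd_of_lt {j j' : ℕ} (h : j < j') : 2 ^ (gSeq hD j + 1) ∣ gSeq hD j' := by
  induction j' with
  | zero => omega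
  | succ j' ih =>
    rcases Nat.lt_succ_iff_lt_or_eq.mp h with h' | h'
    · exact dvd_trans (pow_dvd_pow 2 (by
        have := (gSeq_strictMono hD).monotone (Nat.le_of_lt_succ h)
        have := gSeq_lt_succ hD j'
        have h3 : gSeq hD j ≤ gSeq hD j' := (gSeq_strictMono hD).monotone (by omega)
        omega)) (alphaSeq_succ_spec hD j').2
    · subst h'; exact (alphaSeq_succ_spec hD j).2

lemma testBit_le_of_true {n i : ℕ} (h : n.testBit i = true) : i ≤ n := by
  have h1 : 2 ^ i ≤ n := Nat.ge_two_pow_of_testBit h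
  have h2 : i < 2 ^ i := Nat.lt_two_pow_self
  omega

lemma testBit_gSeq_false_of_le {j j' i : ℕ} (h : j < j') (hi : i ≤ gSeq hD j) :
    (gSeq hD j').testBit i = false := by
  obtain ⟨c, hc⟩ := gSeq_dvd_of_lt hD h
  rw [hc, Nat.testBit_two_pow_mul]
  simp [Nat.lt_succ_of_le hi, Nat.not_le_of_lt (Nat.lt_succ_of_le hi)]

lemma testBit_sum_gSeq (β : Finset ℕ) (i : ℕ) :
    ((∑ j ∈ β, gSeq hD j).testBit i = true) ↔ ∃ j ∈ β, (gSeq hD j).testBit i = true := by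
  classical
  induction β using Finset.induction_on_min with
  | empty => simp
  | insert a s hmin ih =>
    rw [Finset.sum_insert (fun ha => lt_irrefl a (hmin a ha))]
    have hv : gSeq hD a < 2 ^ (gSeq hD a + 1) :=
      lt_of_lt_of_le Nat.lt_two_pow_self (Nat.pow_le_pow_right (by norm_num) (Nat.le_succ _))
    have hdvd : 2 ^ (gSeq hD a + 1) ∣ ∑ j ∈ s, gSeq hD j :=
      Finset.dvd_sum fun j hj => gSeq_dvd_of_lt hD (hmin j hj)
    rw [testBit_add_of_dvd hv hdvd]
    simp only [Bool.or_eq_true, ih, Finset.mem_insert]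
    constructor
    · rintro (h | ⟨j, hj, h⟩)
      · exact ⟨a, Or.inl rfl, h⟩
      · exact ⟨j, Or.inr hj, h⟩
    · rintro ⟨j, (rfl | hj), h⟩
      · exact Or.inl h
      · exact Or.inr ⟨j, hj, h⟩

lemma cross_lt {j j' a b : ℕ} (h : j < j') (ha : a ∈ alphaSeq hD j) (hb : b ∈ alphaSeq hD j') :
    a < b := by
  obtain ⟨j'', rfl⟩ : ∃ j'', j' = j'' + 1 := ⟨j' - 1, by omega⟩
  have h1 : a ≤ gSeq hD j := elem_le_gSeq hD ha
  have h2 : gSeq hD j ≤ gSeq hD j'' := (gSeq_strictMono hD).monotone (by omega)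
  have h3 : gSeq hD j'' < b := (alphaSeq_succ_spec hD j'').1 b hb
  omega

lemma sum_gSeq_mem_FS {β : Finset ℕ} {m : ℕ} (hne : β.Nonempty) (hm : ∀ j ∈ β, m ≤ j) :
    (∑ j ∈ β, gSeq hD j) ∈ FS (D \ Set.Iic m) := by
  classical
  refine ⟨β.biUnion (alphaSeq hD), ?_, ?_, ?_⟩
  · intro a ha
    simp only [Finset.coe_biUnion, Set.mem_iUnion, Finset.mem_coe] at ha
    obtain ⟨j, hj, haj⟩ := ha
    refine ⟨(alphaSeq_spec hD j).1 haj, ?_⟩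
    have h1 : j < a := (alphaSeq_spec hD j).2.1 a haj
    have h2 : m ≤ j := hm j hj
    simp only [Set.mem_Iic]
    omega
  · obtain ⟨j, hj⟩ := hne
    obtain ⟨a, ha⟩ := (alphaSeq_spec hD j).2.2
    exact ⟨a, Finset.mem_biUnion.mpr ⟨j, hj, ha⟩⟩
  · have hdisj : (↑β : Set ℕ).PairwiseDisjoint (alphaSeq hD) := by
      intro j _ j' _ hne'
      apply Finset.disjoint_left.mpr
      intro a ha ha'
      rcases Nat.lt_or_ge j j' with h | h
      · exact lt_irrefl a (cross_lt hD h ha ha')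
      · have h2 : j' < j := by
          rcases Nat.lt_or_ge j' j with h' | h'
          · exact h'
          · exact absurd (Nat.le_antisymm h h').symm hne'
        exact lt_irrefl a (cross_lt hD h2 ha' ha)
    rw [Finset.sum_biUnion hdisj]
    rfl

lemma converse [TopologicalSpace X] [T2Space X] {f : (ℕ → ℕ) → X} (hf : Continuous f) {η : X}
    (h : IsFSLimitPoint (seqOf f) η) : η ∈ Set.range f := by
  classical
  obtain ⟨D, hD, hconv⟩ := h
  have hyp' : ∀ U ∈ 𝓝 η, ∃ m : ℕ, ∀ β : Finset ℕ, β.Nonempty → (∀ j ∈ β, m ≤ j) →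
      seqOf f (∑ j ∈ β, gSeq hD j) ∈ U := by
    intro U hU
    obtain ⟨K, hKfin, hK⟩ := hconv U hU
    obtain ⟨m, hm⟩ := hKfin.bddAbove
    refine ⟨m, fun β hβne hβm => ?_⟩
    apply hK
    have hKm : K ⊆ Set.Iic m := fun a ha => Set.mem_Iic.mpr (hm ha)
    exact FS_mono (Set.diff_subset_diff_right hKm) (sum_gSeq_mem_FS hD hβne hβm)
  by_cases hcase : ∃ m₀ : ℕ, ∀ β : Finset ℕ, β.Nonempty → (∀ j ∈ β, m₀ ≤ j) →
      ∃ x k, Good (∑ j ∈ β, gSeq hD j) x k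
  · obtain ⟨m₀, hm₀⟩ := hcase
    have H : ∀ j, m₀ ≤ j → ∃ x k, Good (gSeq hD j) x k := by
      intro j hj
      have := hm₀ {j} (Finset.singleton_nonempty j) (by simpa using hj)
      simpa using this
    choose! xx kk hGood using H
    have hpair : ∀ j j', m₀ ≤ j → j < j' →
        kk j < kk j' ∧ ∀ i < kk j, xx j i = xx j' i := by
      intro j j' hj hjj
      have hj' : m₀ ≤ j' := by omega
      obtain ⟨x, k, hGs⟩ := hm₀ {j, j'} ⟨j, by simp⟩
        (by intro i hi; simp only [Finset.mem_insert, Finset.mem_singleton] at hi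
            rcases hi with rfl | rfl <;> omega)
      rw [Finset.sum_pair (by omega)] at hGs
      have hbits : ∀ i, ((gSeq hD j + gSeq hD j').testBit i) =
          ((gSeq hD j).testBit i || (gSeq hD j').testBit i) :=
        fun i => testBit_add_of_dvd
          (lt_of_lt_of_le Nat.lt_two_pow_self (Nat.pow_le_pow_right (by norm_num) (Nat.le_succ _)))
          (gSeq_dvd_of_lt hD hjj) i
      have b1 : (gSeq hD j + gSeq hD j').testBit (code (xx j) (kk j)) = true := by
        rw [hbits]; simp [(hGood j hj).2.1]
      have b2 : (gSeq hD j + gSeq hD j').testBit (code (xx j') (kk j')) = true := by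
        rw [hbits]; simp [(hGood j' hj').2.1]
      obtain ⟨i1, hi10, hi1k, hc1⟩ := hGs.2.2 _ b1
      obtain ⟨i2, hi20, hi2k, hc2⟩ := hGs.2.2 _ b2
      obtain ⟨hk1, ha1⟩ := code_inj hc1
      obtain ⟨hk2, ha2⟩ := code_inj hc2
      have hle : code (xx j) (kk j) ≤ gSeq hD j := testBit_le_of_true (hGood j hj).2.1
      have hgt : gSeq hD j < code (xx j') (kk j') := by
        by_contra hcon
        push_neg at hcon
        have h2 := (hGood j' hj').2.1
        rw [testBit_gSeq_false_of_le hD hjj hcon] at h2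
        exact Bool.false_ne_true h2
      have hklt : kk j < kk j' := by
        have hcc : code x i1 < code x i2 := by rw [← hc1, ← hc2]; omega
        have := (code_strictMono x).lt_iff_lt.mp hcc
        omega
      refine ⟨hklt, fun i hi => ?_⟩
      have e1 : xx j i = x i := by
        have := ha1 i hi
        simpa using this
      have e2 : xx j' i = x i := ha2 i (by omega)
      rw [e1, ← e2]
    have hkgrow : ∀ t, t + 1 ≤ kk (m₀ + t) := by
      intro t
      induction t with
      | zero => have := (hGood m₀ le_rfl).1; simp only [Nat.zero_add, Nat.add_zero]; omega
      | succ t ih =>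
        have h2 := (hpair (m₀ + t) (m₀ + t + 1) (by omega) (by omega)).1
        have h3 : m₀ + (t + 1) = m₀ + t + 1 := by omega
        rw [h3]
        omega
    set xs : ℕ → ℕ := fun i => xx (m₀ + i) i with hxs
    have coh : ∀ j, m₀ ≤ j → ∀ i, i < kk j → xx j i = xs i := by
      intro j hj i hi
      rcases lt_trichotomy j (m₀ + i) with h | h | h
      · exact (hpair j (m₀ + i) hj h).2 i hi
      · simp only [hxs, ← h]
      · exact ((hpair (m₀ + i) j (by omega) h).2 i (by have := hkgrow i; omega)).symm
    refine ⟨xs, ?_⟩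
    by_contra hne
    obtain ⟨V, U, hVo, hUo, hfV, hηU, hdisj⟩ := t2_separation hne
    have htd : Tendsto (fun k => f (trunc xs k)) atTop (𝓝 (f xs)) :=
      (hf.tendsto xs).comp (tendsto_trunc xs)
    obtain ⟨k1, hk1⟩ := mem_atTop_sets.mp (htd (hVo.mem_nhds hfV))
    obtain ⟨m, hm⟩ := hyp' U (hUo.mem_nhds hηU)
    set j := max (max m₀ m) (m₀ + k1) with hj
    have hj0 : m₀ ≤ j := le_trans (le_max_left _ _) (le_max_left _ _)
    have hjm : m ≤ j := le_trans (le_max_right _ _) (le_max_left _ _)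
    have hjk : m₀ + k1 ≤ j := le_max_right _ _
    have hU1 : seqOf f (gSeq hD j) ∈ U := by
      have := hm {j} (Finset.singleton_nonempty j) (by simpa using hjm)
      rwa [Finset.sum_singleton] at this
    have hyv : seqOf f (gSeq hD j) = f (trunc (xx j) (kk j)) := seqOf_eq_of_good (hGood j hj0)
    have hkb : k1 ≤ kk j := by
      have h1 := hkgrow (j - m₀)
      have h2 : m₀ + (j - m₀) = j := by omega
      rw [h2] at h1
      omega
    have htr : trunc (xx j) (kk j) = trunc xs (kk j) := by
      funext i
      simp only [trunc]
      split
      · exact coh j hj0 i ‹_›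
      · rfl
    have hV1 : f (trunc xs (kk j)) ∈ V := hk1 (kk j) hkb
    rw [hyv, htr] at hU1
    exact Set.disjoint_left.mp hdisj.symm hU1 hV1
  · push_neg at hcase
    refine ⟨fun _ => 0, ?_⟩
    have key : ∀ U ∈ 𝓝 η, f (fun _ => 0) ∈ U := by
      intro U hU
      obtain ⟨m, hm⟩ := hyp' U hU
      obtain ⟨β, hβne, hβm, hng⟩ := hcase m
      have := hm β hβne hβm
      rwa [seqOf_eq_of_not (by rintro ⟨⟨x, k⟩, hp⟩; exact (hng x k) hp)] at this
    have hcl : η ∈ closure {f (fun _ => 0)} := by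
      rw [mem_closure_iff]
      intro o ho hηo
      exact ⟨f (fun _ => 0), key o (ho.mem_nhds hηo), rfl⟩
    rw [closure_singleton] at hcl
    exact (Set.mem_singleton_iff.mp hcl).symm

lemma infinite_iff_gt {s : Set ℕ} : s.Infinite ↔ ∀ m, ∃ i, m < i ∧ i ∈ s := by
  constructor
  · intro h m
    obtain ⟨i, hi⟩ := (h.diff (Set.finite_Iic m)).nonempty
    refine ⟨i, ?_, hi.1⟩
    have := hi.2
    simp only [Set.mem_Iic] at this
    omega
  · intro h
    by_contra hfin
    rw [Set.not_infinite] at hfin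
    obtain ⟨m, hm⟩ := hfin.bddAbove
    obtain ⟨i, hmi, his⟩ := h m
    exact absurd (hm his) (by omega)

lemma analytic_aux [TopologicalSpace X] [PolishSpace X] (y : ℕ → X) :
    MeasureTheory.AnalyticSet {η : X | IsFSLimitPoint y η} ∧
    MeasureTheory.AnalyticSet {η : X | IsIdealLimitPoint hindmanIdeal y η} := by
  classical
  letI := TopologicalSpace.upgradeIsCompletelyMetrizable X
  haveI : PolishSpace (ℕ → Bool) := PolishSpace.mk
  letI : MeasurableSpace ((ℕ → Bool) × X) := borel _
  haveI : BorelSpace ((ℕ → Bool) × X) := ⟨rfl⟩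
  set S : (ℕ → Bool) → Set ℕ := fun b => {i | b i = true} with hSdef
  have meval : ∀ i : ℕ, MeasurableSet {p : (ℕ → Bool) × X | p.1 i = true} := by
    intro i
    have h1 : Continuous fun p : (ℕ → Bool) × X => p.1 i :=
      (continuous_apply i).comp continuous_fst
    exact ((isOpen_discrete ({true} : Set Bool)).preimage h1).measurableSet
  have mFS : ∀ (n : ℕ) (R : Set ℕ),
      MeasurableSet {p : (ℕ → Bool) × X | n ∈ FS (S p.1 \ R)} := by
    intro n R
    have heq : {p : (ℕ → Bool) × X | n ∈ FS (S p.1 \ R)} =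
        ⋃ (α : Finset ℕ), ⋃ (_ : α.Nonempty ∧ ∑ i ∈ α, i = n),
          ⋂ i ∈ α, ({p : (ℕ → Bool) × X | p.1 i = true} ∩ {_p : (ℕ → Bool) × X | i ∉ R}) := by
      ext p
      simp only [Set.mem_setOf_eq, Set.mem_iUnion, Set.mem_iInter, Set.mem_inter_iff]
      constructor
      · rintro ⟨α, hsub, hne, hsum⟩
        exact ⟨α, ⟨hne, hsum⟩, fun i hi => ⟨(hsub hi).1, (hsub hi).2⟩⟩
      · rintro ⟨α, ⟨hne, hsum⟩, hall⟩
        exact ⟨α, fun i hi => ⟨(hall i hi).1, (hall i hi).2⟩, hne, hsum⟩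
    rw [heq]
    refine MeasurableSet.iUnion fun α => MeasurableSet.iUnion fun _ =>
      MeasurableSet.biInter (Set.to_countable _) fun i _ =>
      (meval i).inter (MeasurableSet.const _)
  have mdist : ∀ (n : ℕ) (c : ℝ), MeasurableSet {p : (ℕ → Bool) × X | dist (y n) p.2 < c} :=
    fun n c => (isOpen_lt (continuous_const.dist continuous_snd) continuous_const).measurableSet
  have minf : MeasurableSet {p : (ℕ → Bool) × X | (S p.1).Infinite} := by
    have heq : {p : (ℕ → Bool) × X | (S p.1).Infinite} =
        ⋂ (m : ℕ), ⋃ (i : ℕ), ⋃ (_ : m < i), {p : (ℕ → Bool) × X | p.1 i = true} := by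
      ext p
      simp only [Set.mem_setOf_eq, Set.mem_iInter, Set.mem_iUnion, infinite_iff_gt]
      constructor
      · intro h m; obtain ⟨i, h1, h2⟩ := h m; exact ⟨i, h1, h2⟩
      · intro h m; obtain ⟨i, h1, h2⟩ := h m; exact ⟨i, h1, h2⟩
    rw [heq]
    exact MeasurableSet.iInter fun m => MeasurableSet.iUnion fun i =>
      MeasurableSet.iUnion fun _ => meval i
  have hpos : ∀ k : ℕ, (0 : ℝ) < 1 / (k + 1) := by
    intro k
    positivity
  constructor
  · set B := {p : (ℕ → Bool) × X | (S p.1).Infinite ∧ ∀ k : ℕ, ∃ m : ℕ, ∀ n : ℕ,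
        n ∈ FS (S p.1 \ Set.Iic m) → dist (y n) p.2 < 1 / (k + 1)} with hB
    have hmeas : MeasurableSet B := by
      rw [hB, Set.setOf_and]
      refine minf.inter ?_
      rw [Set.setOf_forall]
      refine MeasurableSet.iInter fun k => ?_
      rw [Set.setOf_exists]
      refine MeasurableSet.iUnion fun m => ?_
      rw [Set.setOf_forall]
      refine MeasurableSet.iInter fun n => ?_
      have heq : {p : (ℕ → Bool) × X | n ∈ FS (S p.1 \ Set.Iic m) →
          dist (y n) p.2 < 1 / (k + 1)} =
          {p : (ℕ → Bool) × X | n ∈ FS (S p.1 \ Set.Iic m)}ᶜ ∪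
          {p : (ℕ → Bool) × X | dist (y n) p.2 < 1 / (k + 1)} := by
        ext p
        simp only [Set.mem_setOf_eq, Set.mem_union, Set.mem_compl_iff]
        exact imp_iff_not_or
      rw [heq]
      exact ((mFS n _).compl.union (mdist n _))
    have him : {η : X | IsFSLimitPoint y η} = Prod.snd '' B := by
      ext η
      simp only [Set.mem_setOf_eq, Set.mem_image]
      constructor
      · rintro ⟨D, hD, hconv⟩
        set b : ℕ → Bool := fun i => decide (i ∈ D) with hb
        have hSb : S b = D := by ext i; simp [hSdef, hb]
        refine ⟨(b, η), ⟨?_, ?_⟩, rfl⟩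
        · rw [hSb]; exact hD
        · intro k
          obtain ⟨K, hKfin, hK⟩ := hconv (Metric.ball η (1 / (k + 1)))
            (Metric.ball_mem_nhds _ (hpos k))
          obtain ⟨m, hm⟩ := hKfin.bddAbove
          refine ⟨m, fun n hn => ?_⟩
          rw [hSb] at hn
          have h1 : n ∈ FS (D \ K) :=
            FS_mono (Set.diff_subset_diff_right fun a ha => Set.mem_Iic.mpr (hm ha)) hn
          exact Metric.mem_ball.mp (hK n h1)
      · rintro ⟨⟨b, η'⟩, ⟨hinf, hk⟩, rfl⟩
        refine ⟨S b, hinf, fun U hU => ?_⟩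
        obtain ⟨ε, hε, hball⟩ := Metric.mem_nhds_iff.mp hU
        obtain ⟨k, hklt⟩ := exists_nat_one_div_lt hε
        obtain ⟨m, hm⟩ := hk k
        refine ⟨Set.Iic m, Set.finite_Iic m, fun n hn => ?_⟩
        exact hball (Metric.mem_ball.mpr (lt_trans (hm n hn) hklt))
    rw [him]
    exact hmeas.analyticSet.image_of_continuous continuous_snd
  · set B := {p : (ℕ → Bool) × X | (S p.1).Infinite ∧ ∀ k : ℕ, ∃ m : ℕ, ∀ n : ℕ,
        (m < n ∧ n ∈ FS (S p.1)) → dist (y n) p.2 < 1 / (k + 1)} with hB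
    have hmeas : MeasurableSet B := by
      rw [hB, Set.setOf_and]
      refine minf.inter ?_
      rw [Set.setOf_forall]
      refine MeasurableSet.iInter fun k => ?_
      rw [Set.setOf_exists]
      refine MeasurableSet.iUnion fun m => ?_
      rw [Set.setOf_forall]
      refine MeasurableSet.iInter fun n => ?_
      have heq : {p : (ℕ → Bool) × X | (m < n ∧ n ∈ FS (S p.1)) →
          dist (y n) p.2 < 1 / (k + 1)} =
          ({_p : (ℕ → Bool) × X | m < n} ∩ {p : (ℕ → Bool) × X | n ∈ FS (S p.1 \ ∅)})ᶜ ∪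
          {p : (ℕ → Bool) × X | dist (y n) p.2 < 1 / (k + 1)} := by
        ext p
        simp only [Set.mem_setOf_eq, Set.mem_union, Set.mem_compl_iff, Set.mem_inter_iff,
          Set.diff_empty]
        exact imp_iff_not_or
      rw [heq]
      exact ((MeasurableSet.const _).inter (mFS n ∅)).compl.union (mdist n _)
    have him : {η : X | IsIdealLimitPoint hindmanIdeal y η} = Prod.snd '' B := by
      ext η
      simp only [Set.mem_setOf_eq, Set.mem_image]
      constructor
      · rintro ⟨T, hT, hconv⟩
        obtain ⟨D, hD, hDT⟩ := not_mem_hindmanIdeal_iff.mp hT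
        set b : ℕ → Bool := fun i => decide (i ∈ D) with hb
        have hSb : S b = D := by ext i; simp [hSdef, hb]
        refine ⟨(b, η), ⟨?_, ?_⟩, rfl⟩
        · rw [hSb]; exact hD
        · intro k
          have hfin := hconv (Metric.ball η (1 / (k + 1))) (Metric.ball_mem_nhds _ (hpos k))
          obtain ⟨m, hm⟩ := hfin.bddAbove
          refine ⟨m, fun n hn => ?_⟩
          rw [hSb] at hn
          by_contra hcon
          push_neg at hcon
          have h1 : n ∈ T := hDT hn.2
          have h2 : y n ∉ Metric.ball η (1 / (k + 1)) := by
            rw [Metric.mem_ball]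
            push_neg
            exact hcon
          exact absurd (hm ⟨h1, h2⟩) (by omega)
      · rintro ⟨⟨b, η'⟩, ⟨hinf, hk⟩, rfl⟩
        refine ⟨FS (S b), not_mem_hindmanIdeal_iff.mpr ⟨S b, hinf, subset_rfl⟩, fun U hU => ?_⟩
        obtain ⟨ε, hε, hball⟩ := Metric.mem_nhds_iff.mp hU
        obtain ⟨k, hklt⟩ := exists_nat_one_div_lt hε
        obtain ⟨m, hm⟩ := hk k
        apply Set.Finite.subset (Set.finite_Iic m)
        rintro n ⟨hn1, hn2⟩
        simp only [Set.mem_Iic]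
        by_contra hcon
        push_neg at hcon
        exact hn2 (hball (Metric.mem_ball.mpr (lt_trans (hm n ⟨hcon, hn1⟩) hklt)))
    rw [him]
    exact hmeas.analyticSet.image_of_continuous continuous_snd


variable {X : Type*}

lemma main_construction [TopologicalSpace X] [PolishSpace X] (C : Set X) (hCne : C.Nonempty)
    (hC : MeasureTheory.AnalyticSet C) :
    ∃ y : ℕ → X, C = {η | IsFSLimitPoint y η} ∧
      C = {η | IsIdealLimitPoint hindmanIdeal y η} := by
  rw [MeasureTheory.AnalyticSet] at hC
  rcases hC with hC | ⟨f, hfc, hfr⟩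
  · exact absurd hC (Set.nonempty_iff_ne_empty.mp hCne)
  refine ⟨seqOf f, ?_, ?_⟩
  · ext η
    constructor
    · intro hη
      rw [← hfr] at hη
      obtain ⟨x, rfl⟩ := hη
      exact isFSLimitPoint_of_isIdealLimitPoint (forward hfc x)
    · intro hη
      rw [← hfr]
      exact converse hfc hη
  · ext η
    constructor
    · intro hη
      rw [← hfr] at hη
      obtain ⟨x, rfl⟩ := hη
      exact forward hfc x
    · intro hη
      rw [← hfr]
      exact converse hfc (isFSLimitPoint_of_isIdealLimitPoint hη)

end HindmanProof

theorem analytic_eq_lambda_fs_eq_lambda_hindman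
    [TopologicalSpace X] [PolishSpace X] [Uncountable X]
    (C : Set X) (hCne : C.Nonempty) (hC : MeasureTheory.AnalyticSet C) :
    (∃ y : ℕ → X, C = {η | IsFSLimitPoint y η} ∧
        C = {η | IsIdealLimitPoint hindmanIdeal y η}) ∧
      {A : Set X | A.Nonempty ∧ ∃ y : ℕ → X, A = {η | IsFSLimitPoint y η}} =
        {A : Set X | A.Nonempty ∧ MeasureTheory.AnalyticSet A} ∧
      {A : Set X | A.Nonempty ∧
          ∃ y : ℕ → X, A = {η | IsIdealLimitPoint hindmanIdeal y η}} =
        {A : Set X | A.Nonempty ∧ MeasureTheory.AnalyticSet A} := by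
  refine ⟨HindmanProof.main_construction C hCne hC, ?_, ?_⟩
  · ext A
    simp only [Set.mem_setOf_eq]
    constructor
    · rintro ⟨hne, y, rfl⟩
      exact ⟨hne, (HindmanProof.analytic_aux y).1⟩
    · rintro ⟨hne, hA⟩
      obtain ⟨y, h1, _⟩ := HindmanProof.main_construction A hne hA
      exact ⟨hne, y, h1⟩
  · ext A
    simp only [Set.mem_setOf_eq]
    constructor
    · rintro ⟨hne, y, rfl⟩
      exact ⟨hne, (HindmanProof.analytic_aux y).2⟩
    · rintro ⟨hne, hA⟩
      obtain ⟨y, _, h2⟩ := HindmanProof.main_construction A hne hA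
      exact ⟨hne, y, h2⟩
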